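/- Let ξ₁,…,ξₙ be independent mean-zero random vectors in ℝ^d with finite fourth moments, W := Σ_{u=1}^n ξ_u, Σ_W := Var(W), and for each i set W^{(i)} := W − ξᵢ. Then for every i = 1,…,n, almost surely: E[(ξᵢ · W^{(i)})² | ξᵢ] ≤ ξᵢᵀ Σ_W ξᵢ, and E[(ξᵢ · W^{(i)})⁴ | ξᵢ] ≤ |ξᵢ|⁴ Σ_{u=1}^n E[|ξ_u|⁴] + 3 (ξᵢᵀ Σ_W ξᵢ)². -/

import Mathlib

open MeasureTheory ProbabilityTheory Real Matrix Filter
open scoped ENNReal NNReal Topology RealInnerProductSpace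

noncomputable section

namespace Paper

/-- `Ψ(x) = x (|log x| ∨ 1)`. -/
def Psi (x : ℝ) : ℝ := x * max |Real.log x| 1

/-- Hilbert–Schmidt (Frobenius) norm of a matrix. -/
def hsNorm {d : ℕ} (M : Matrix (Fin d) (Fin d) ℝ) : ℝ :=
  Real.sqrt (∑ j, ∑ k, M j k ^ 2)

/-- Operator norm of a matrix, acting on Euclidean space. -/
def opNorm {d : ℕ} (M : Matrix (Fin d) (Fin d) ℝ) : ℝ :=
  ‖LinearMap.toContinuousLinearMap (Matrix.toEuclideanLin M)‖

/-- Multiplication of a Euclidean vector by a matrix. -/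
def mulVecE {d : ℕ} (M : Matrix (Fin d) (Fin d) ℝ) (x : EuclideanSpace ℝ (Fin d)) :
    EuclideanSpace ℝ (Fin d) :=
  (WithLp.equiv 2 (Fin d → ℝ)).symm (M.mulVec ((WithLp.equiv 2 (Fin d → ℝ)) x))

/-- Covariance matrix of a random vector. -/
def covMatrix {d : ℕ} {Ω : Type*} [MeasurableSpace Ω] (μ : Measure Ω)
    (Y : Ω → EuclideanSpace ℝ (Fin d)) : Matrix (Fin d) (Fin d) ℝ :=
  Matrix.of fun j k =>
    (∫ ω, Y ω j * Y ω k ∂μ) - (∫ ω, Y ω j ∂μ) * (∫ ω, Y ω k ∂μ)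

/-- The standard Gaussian distribution `N(0, I_d)` on `ℝ^d`. -/
def stdGaussian (d : ℕ) : Measure (EuclideanSpace ℝ (Fin d)) :=
  (Measure.pi fun _ : Fin d => gaussianReal 0 1).map
    (WithLp.equiv 2 (Fin d → ℝ)).symm

/-- The centered Gaussian distribution `N(0, S)` on `ℝ^d` for a positive semidefinite `S`,
realized as the pushforward of the standard Gaussian by the square root of `S`. -/
def gaussianOf {d : ℕ} {S : Matrix (Fin d) (Fin d) ℝ} (hS : S.PosSemidef) :
    Measure (EuclideanSpace ℝ (Fin d)) :=
  (stdGaussian d).map (mulVecE (hS.1.eigenvectorUnitary.1 *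
    diagonal ((RCLike.ofReal : ℝ → ℝ) ∘ Real.sqrt ∘ hS.1.eigenvalues) *
    (star hS.1.eigenvectorUnitary : Matrix (Fin d) (Fin d) ℝ)))

/-- The largest eigenvalue of a symmetric matrix. -/
def lambdaMax {d : ℕ} {A : Matrix (Fin d) (Fin d) ℝ} (hA : A.IsHermitian) : ℝ :=
  ⨆ i, hA.eigenvalues i

/-- `Λ₁(A) = √(∑_{j=1}^d λ_j(A)²)` for the eigenvalues `λ₁(A) ≥ ⋯ ≥ λ_d(A)`. -/
def Lambda1 {d : ℕ} {A : Matrix (Fin d) (Fin d) ℝ} (hA : A.IsHermitian) : ℝ :=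
  Real.sqrt (∑ i, hA.eigenvalues i ^ 2)

/-- `Λ₂(A) = √(∑_{j=2}^d λ_j(A)²)` for the eigenvalues `λ₁(A) ≥ ⋯ ≥ λ_d(A)`. -/
def Lambda2 {d : ℕ} {A : Matrix (Fin d) (Fin d) ℝ} (hA : A.IsHermitian) : ℝ :=
  Real.sqrt ((∑ i, hA.eigenvalues i ^ 2) - lambdaMax hA ^ 2)

/-- `κ(A) = (Λ₁(A) Λ₂(A))^{-1/2}`. -/
def kappa {d : ℕ} {A : Matrix (Fin d) (Fin d) ℝ} (hA : A.IsHermitian) : ℝ :=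
  (Lambda1 hA * Lambda2 hA) ^ (-(1 : ℝ) / 2)

section AuxPortnoy

variable {Ω : Type*} [MeasurableSpace Ω] {μ : Measure Ω} [IsProbabilityMeasure μ]

lemma abs_pow_le_one_add {x : ℝ} {k : ℕ} (hk : k ≤ 4) : |x| ^ k ≤ 1 + x ^ 4 := by
  have h4 : |x| ^ 4 = x ^ 4 := by
    rw [← abs_pow, abs_of_nonneg (by positivity)]
  rcases le_or_gt |x| 1 with h | h
  · have : |x| ^ k ≤ 1 := pow_le_one₀ (abs_nonneg x) h
    nlinarith [pow_nonneg (abs_nonneg x) 4, h4]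
  · have : |x| ^ k ≤ |x| ^ 4 := pow_le_pow_right₀ h.le hk
    nlinarith

lemma integrable_pow_of_pow_four {f : Ω → ℝ} (hm : AEStronglyMeasurable f μ)
    (h4 : Integrable (fun ω => f ω ^ 4) μ) {k : ℕ} (hk : k ≤ 4) :
    Integrable (fun ω => f ω ^ k) μ := by
  refine ((integrable_const (1:ℝ)).add h4).mono' (hm.pow _) ?_
  filter_upwards with ω
  rw [Real.norm_eq_abs, abs_pow]
  exact abs_pow_le_one_add hk

lemma integrable_pow_four_sum {ι : Type*} {s : Finset ι} {f : ι → Ω → ℝ}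
    (hm : ∀ i, Measurable (f i)) (h4 : ∀ i, Integrable (fun ω => f i ω ^ 4) μ) :
    Integrable (fun ω => (∑ u ∈ s, f u ω) ^ 4) μ := by
  classical
  induction s using Finset.cons_induction with
  | empty => simpa using (integrable_const (0:ℝ))
  | cons i s hi ih =>
    simp only [Finset.sum_cons]
    have hSm : Measurable fun ω => ∑ u ∈ s, f u ω := by
      exact Finset.measurable_sum s fun u _ => hm u
    refine (((h4 i).const_mul 8).add (ih.const_mul 8)).mono'
      (((hm i).add hSm).pow_const 4).aestronglyMeasurable ?_
    filter_upwards with ω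
    set a := f i ω; set b := ∑ u ∈ s, f u ω
    have : (a + b) ^ 4 ≤ 8 * a ^ 4 + 8 * b ^ 4 := by
      nlinarith [sq_nonneg (a - b), sq_nonneg (a + b), sq_nonneg (a ^ 2 - b ^ 2),
        sq_nonneg (a * b), sq_nonneg (a ^ 2 + b ^ 2)]
    have h0 : (0:ℝ) ≤ (a + b) ^ 4 := by positivity
    rw [Real.norm_eq_abs, abs_of_nonneg h0]
    exact this


section Moments

variable {ι : Type*} {f : ι → Ω → ℝ}

lemma integral_sum_sq
    (hm : ∀ i, Measurable (f i))
    (hindep : iIndepFun f μ)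
    (hmean : ∀ i, ∫ ω, f i ω ∂μ = 0)
    (h4 : ∀ i, Integrable (fun ω => f i ω ^ 4) μ)
    (s : Finset ι) :
    ∫ ω, (∑ u ∈ s, f u ω) ^ 2 ∂μ = ∑ u ∈ s, ∫ ω, f u ω ^ 2 ∂μ := by
  classical
  induction s using Finset.cons_induction with
  | empty => simp
  | cons i s hi ih =>
    have hSm : Measurable fun ω => ∑ u ∈ s, f u ω := Finset.measurable_sum s fun u _ => hm u
    have hS4 : Integrable (fun ω => (∑ u ∈ s, f u ω) ^ 4) μ := integrable_pow_four_sum hm h4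
    have hSk : ∀ k, k ≤ 4 → Integrable (fun ω => (∑ u ∈ s, f u ω) ^ k) μ := fun k hk =>
      integrable_pow_of_pow_four hSm.aestronglyMeasurable hS4 hk
    have hfk : ∀ u, ∀ k, k ≤ 4 → Integrable (fun ω => f u ω ^ k) μ := fun u k hk =>
      integrable_pow_of_pow_four (hm u).aestronglyMeasurable (h4 u) hk
    have hSint : Integrable (fun ω => ∑ u ∈ s, f u ω) μ := by
      simpa using hSk 1 (by norm_num)
    have hfint : ∀ u, Integrable (f u) μ := fun u => by simpa using hfk u 1 (by norm_num)
    have hIS : IndepFun (fun ω => ∑ u ∈ s, f u ω) (f i) μ := by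
      have h := hindep.indepFun_finsetSum_of_notMem hm hi
      have he : (∑ j ∈ s, f j) = fun ω => ∑ u ∈ s, f u ω := by
        funext ω; simp
      rwa [he] at h
    have hS1 : ∫ ω, (∑ u ∈ s, f u ω) ∂μ = 0 := by
      rw [integral_finset_sum s fun u _ => hfint u]
      simp [hmean]
    have hmul : Integrable (fun ω => (∑ u ∈ s, f u ω) * f i ω) μ := by
      exact hIS.integrable_mul hSint (hfint i)
    have hmulint : ∫ ω, (∑ u ∈ s, f u ω) * f i ω ∂μ
        = (∫ ω, ∑ u ∈ s, f u ω ∂μ) * ∫ ω, f i ω ∂μ := by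
      exact hIS.integral_fun_mul_eq_mul_integral hSint.aestronglyMeasurable (hfint i).aestronglyMeasurable
    have hexp : ∀ ω, (∑ u ∈ Finset.cons i s hi, f u ω) ^ 2
        = f i ω ^ 2 + (2 * ((∑ u ∈ s, f u ω) * f i ω) + (∑ u ∈ s, f u ω) ^ 2) := by
      intro ω; rw [Finset.sum_cons]; ring
    have hI2 : Integrable (fun ω => 2 * ((∑ u ∈ s, f u ω) * f i ω)) μ := by
      exact hmul.const_mul 2
    have hI1 : Integrable (fun ω => 2 * ((∑ u ∈ s, f u ω) * f i ω) + (∑ u ∈ s, f u ω) ^ 2) μ := by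
      exact hI2.add (hSk 2 (by norm_num))
    rw [integral_congr_ae (Filter.Eventually.of_forall hexp),
      integral_add (hfk i 2 (by norm_num)) hI1,
      integral_add hI2 (hSk 2 (by norm_num)),
      integral_const_mul, hmulint, hmean i, ih, Finset.sum_cons]
    ring

lemma integral_sum_four_le
    (hm : ∀ i, Measurable (f i))
    (hindep : iIndepFun f μ)
    (hmean : ∀ i, ∫ ω, f i ω ∂μ = 0)
    (h4 : ∀ i, Integrable (fun ω => f i ω ^ 4) μ)
    (s : Finset ι) :
    ∫ ω, (∑ u ∈ s, f u ω) ^ 4 ∂μ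
      ≤ ∑ u ∈ s, ∫ ω, f u ω ^ 4 ∂μ + 3 * (∑ u ∈ s, ∫ ω, f u ω ^ 2 ∂μ) ^ 2 := by
  classical
  induction s using Finset.cons_induction with
  | empty => simp
  | cons i s hi ih =>
    have hSm : Measurable fun ω => ∑ u ∈ s, f u ω := Finset.measurable_sum s fun u _ => hm u
    have hS4 : Integrable (fun ω => (∑ u ∈ s, f u ω) ^ 4) μ := integrable_pow_four_sum hm h4
    have hSk : ∀ k, k ≤ 4 → Integrable (fun ω => (∑ u ∈ s, f u ω) ^ k) μ := fun k hk =>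
      integrable_pow_of_pow_four hSm.aestronglyMeasurable hS4 hk
    have hfk : ∀ u, ∀ k, k ≤ 4 → Integrable (fun ω => f u ω ^ k) μ := fun u k hk =>
      integrable_pow_of_pow_four (hm u).aestronglyMeasurable (h4 u) hk
    have hIS : IndepFun (fun ω => ∑ u ∈ s, f u ω) (f i) μ := by
      have h := hindep.indepFun_finsetSum_of_notMem hm hi
      have he : (∑ j ∈ s, f j) = fun ω => ∑ u ∈ s, f u ω := by
        funext ω; simp
      rwa [he] at h
    have hISab : ∀ a b : ℕ, IndepFun (fun ω => (∑ u ∈ s, f u ω) ^ a) (fun ω => f i ω ^ b) μ :=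
      fun a b => hIS.comp (measurable_id.pow_const a) (measurable_id.pow_const b)
    have hS1 : ∫ ω, (∑ u ∈ s, f u ω) ∂μ = 0 := by
      rw [integral_finset_sum s fun u _ => by simpa using hfk u 1 (by norm_num)]
      simp [hmean]
    have hmulab : ∀ a b : ℕ, a ≤ 4 → b ≤ 4 →
        Integrable (fun ω => (∑ u ∈ s, f u ω) ^ a * f i ω ^ b) μ := fun a b ha hb => by
      exact (hISab a b).integrable_mul (hSk a ha) (hfk i b hb)
    have hintab : ∀ a b : ℕ, a ≤ 4 → b ≤ 4 →
        ∫ ω, (∑ u ∈ s, f u ω) ^ a * f i ω ^ b ∂μ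
          = (∫ ω, (∑ u ∈ s, f u ω) ^ a ∂μ) * ∫ ω, f i ω ^ b ∂μ := fun a b ha hb => by
      exact (hISab a b).integral_fun_mul_eq_mul_integral (hSk a ha).aestronglyMeasurable (hfk i b hb).aestronglyMeasurable
    have hexp : ∀ ω, (∑ u ∈ Finset.cons i s hi, f u ω) ^ 4
        = f i ω ^ 4 + (4 * ((∑ u ∈ s, f u ω) ^ 1 * f i ω ^ 3)
          + (6 * ((∑ u ∈ s, f u ω) ^ 2 * f i ω ^ 2)
          + (4 * ((∑ u ∈ s, f u ω) ^ 3 * f i ω ^ 1) + (∑ u ∈ s, f u ω) ^ 4))) := by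
      intro ω; rw [Finset.sum_cons]; ring
    have h1 : ∫ ω, (∑ u ∈ s, f u ω) ^ 1 * f i ω ^ 3 ∂μ = 0 := by
      rw [hintab 1 3 (by norm_num) (by norm_num)]
      have h0 : ∫ ω, (∑ u ∈ s, f u ω) ^ 1 ∂μ = 0 := by simpa using hS1
      rw [h0, zero_mul]
    have h3 : ∫ ω, (∑ u ∈ s, f u ω) ^ 3 * f i ω ^ 1 ∂μ = 0 := by
      rw [hintab 3 1 (by norm_num) (by norm_num)]
      have h0 : ∫ ω, f i ω ^ 1 ∂μ = 0 := by simpa using hmean i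
      rw [h0, mul_zero]
    have h2 : ∫ ω, (∑ u ∈ s, f u ω) ^ 2 * f i ω ^ 2 ∂μ
        = (∑ u ∈ s, ∫ ω, f u ω ^ 2 ∂μ) * ∫ ω, f i ω ^ 2 ∂μ := by
      rw [hintab 2 2 (by norm_num) (by norm_num), integral_sum_sq hm hindep hmean h4 s]
    have hB1 : Integrable (fun ω => 4 * ((∑ u ∈ s, f u ω) ^ 1 * f i ω ^ 3)) μ := by
      exact (hmulab 1 3 (by norm_num) (by norm_num)).const_mul 4
    have hB2 : Integrable (fun ω => 6 * ((∑ u ∈ s, f u ω) ^ 2 * f i ω ^ 2)) μ := by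
      exact (hmulab 2 2 (by norm_num) (by norm_num)).const_mul 6
    have hB3 : Integrable (fun ω => 4 * ((∑ u ∈ s, f u ω) ^ 3 * f i ω ^ 1)) μ := by
      exact (hmulab 3 1 (by norm_num) (by norm_num)).const_mul 4
    have hC3 : Integrable (fun ω => 4 * ((∑ u ∈ s, f u ω) ^ 3 * f i ω ^ 1)
        + (∑ u ∈ s, f u ω) ^ 4) μ := by
      exact hB3.add (hSk 4 (by norm_num))
    have hC2 : Integrable (fun ω => 6 * ((∑ u ∈ s, f u ω) ^ 2 * f i ω ^ 2)
        + (4 * ((∑ u ∈ s, f u ω) ^ 3 * f i ω ^ 1) + (∑ u ∈ s, f u ω) ^ 4)) μ := by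
      exact hB2.add hC3
    have hC1 : Integrable (fun ω => 4 * ((∑ u ∈ s, f u ω) ^ 1 * f i ω ^ 3)
        + (6 * ((∑ u ∈ s, f u ω) ^ 2 * f i ω ^ 2)
          + (4 * ((∑ u ∈ s, f u ω) ^ 3 * f i ω ^ 1) + (∑ u ∈ s, f u ω) ^ 4))) μ := by
      exact hB1.add hC2
    have hint : ∫ ω, (∑ u ∈ Finset.cons i s hi, f u ω) ^ 4 ∂μ
        = ∫ ω, f i ω ^ 4 ∂μ + (4 * ∫ ω, (∑ u ∈ s, f u ω) ^ 1 * f i ω ^ 3 ∂μ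
            + (6 * ∫ ω, (∑ u ∈ s, f u ω) ^ 2 * f i ω ^ 2 ∂μ
              + (4 * ∫ ω, (∑ u ∈ s, f u ω) ^ 3 * f i ω ^ 1 ∂μ
                + ∫ ω, (∑ u ∈ s, f u ω) ^ 4 ∂μ))) := by
      rw [integral_congr_ae (Filter.Eventually.of_forall hexp),
        integral_add (hfk i 4 (by norm_num)) hC1,
        integral_add hB1 hC2,
        integral_add hB2 hC3,
        integral_add hB3 (hSk 4 (by norm_num)),
        integral_const_mul, integral_const_mul, integral_const_mul]
    have hA : (0:ℝ) ≤ ∑ u ∈ s, ∫ ω, f u ω ^ 2 ∂μ :=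
      Finset.sum_nonneg fun u _ => integral_nonneg fun ω => by positivity
    have hb0 : (0:ℝ) ≤ ∫ ω, f i ω ^ 2 ∂μ := integral_nonneg fun ω => by positivity
    rw [hint, h1, h3, h2, Finset.sum_cons, Finset.sum_cons]
    nlinarith [ih, hA, hb0, sq_nonneg (∫ ω, f i ω ^ 2 ∂μ)]

end Moments


lemma euclid_apply_le_norm {d : ℕ} (x : EuclideanSpace ℝ (Fin d)) (j : Fin d) :
    |x j| ≤ ‖x‖ := by
  rw [EuclideanSpace.norm_eq]
  calc |x j| = Real.sqrt (‖x j‖ ^ 2) := by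
        rw [Real.sqrt_sq_eq_abs, Real.norm_eq_abs, abs_abs]
    _ ≤ Real.sqrt (∑ k, ‖x k‖ ^ 2) :=
        Real.sqrt_le_sqrt (Finset.single_le_sum (f := fun k => ‖x k‖ ^ 2)
          (fun k _ => by positivity) (Finset.mem_univ j))

section Main

variable {d n : ℕ} {Ω : Type} [MeasurableSpace Ω] {μ : Measure Ω} [IsProbabilityMeasure μ]

lemma condexp_inner_pow_eq
    (ξ : Fin n → Ω → EuclideanSpace ℝ (Fin d))
    (hmeas : ∀ i, Measurable (ξ i))
    (hindep : iIndepFun ξ μ)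
    (hmom : ∀ i, Integrable (fun ω => ‖ξ i ω‖ ^ 4) μ)
    (i : Fin n) {k : ℕ} (hk : k ≤ 4) :
    (μ[fun ω' => ⟪ξ i ω', (∑ u, ξ u ω') - ξ i ω'⟫ ^ k |
        MeasurableSpace.comap (ξ i) inferInstance])
      =ᵐ[μ] fun ω => ∫ ω', ⟪ξ i ω, ∑ u ∈ Finset.univ.erase i, ξ u ω'⟫ ^ k ∂μ := by
  classical
  set X : Ω → EuclideanSpace ℝ (Fin d) := ξ i with hX
  set Y : Ω → EuclideanSpace ℝ (Fin d) := fun ω => ∑ u ∈ Finset.univ.erase i, ξ u ω with hY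
  have hXm : Measurable X := hmeas i
  have hYm : Measurable Y := Finset.measurable_sum _ fun u _ => hmeas u
  have hXY : IndepFun X Y μ := by
    have h := hindep.indepFun_finsetSum_of_notMem hmeas (Finset.notMem_erase i Finset.univ)
    have he : (∑ j ∈ Finset.univ.erase i, ξ j) = Y := by funext ω; simp [hY]
    rw [he] at h
    exact h.symm
  have hX4 : Integrable (fun ω => ‖X ω‖ ^ 4) μ := hmom i
  have hY4 : Integrable (fun ω => ‖Y ω‖ ^ 4) μ := by
    refine (integrable_pow_four_sum (f := fun u ω => ‖ξ u ω‖)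
      (fun u => (hmeas u).norm) (fun u => hmom u) (s := Finset.univ.erase i)).mono'
      (hYm.norm.pow_const 4).aestronglyMeasurable ?_
    filter_upwards with ω
    have h1 : ‖Y ω‖ ≤ ∑ u ∈ Finset.univ.erase i, ‖ξ u ω‖ := norm_sum_le _ _
    rw [Real.norm_eq_abs, abs_of_nonneg (by positivity)]
    exact pow_le_pow_left₀ (norm_nonneg _) h1 4
  have hXk : Integrable (fun ω => ‖X ω‖ ^ k) μ :=
    integrable_pow_of_pow_four hXm.norm.aestronglyMeasurable hX4 hk
  have hYk : Integrable (fun ω => ‖Y ω‖ ^ k) μ :=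
    integrable_pow_of_pow_four hYm.norm.aestronglyMeasurable hY4 hk
  have hprod : Integrable (fun ω => ‖X ω‖ ^ k * ‖Y ω‖ ^ k) μ := by
    have hc : IndepFun (fun ω => ‖X ω‖ ^ k) (fun ω => ‖Y ω‖ ^ k) μ :=
      hXY.comp (measurable_norm.pow_const k) (measurable_norm.pow_const k)
    exact hc.integrable_mul hXk hYk
  have hf_sm : StronglyMeasurable
      (fun p : EuclideanSpace ℝ (Fin d) × EuclideanSpace ℝ (Fin d) => ⟪p.1, p.2⟫ ^ k) :=
    (continuous_inner.pow k).stronglyMeasurable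
  have hint : Integrable (fun a =>
      (fun p : EuclideanSpace ℝ (Fin d) × EuclideanSpace ℝ (Fin d) => ⟪p.1, p.2⟫ ^ k)
        (X a, Y a)) μ := by
    refine hprod.mono' (hf_sm.comp_measurable (hXm.prodMk hYm)).aestronglyMeasurable ?_
    filter_upwards with a
    rw [Real.norm_eq_abs, abs_pow]
    calc |⟪X a, Y a⟫| ^ k ≤ (‖X a‖ * ‖Y a‖) ^ k :=
          pow_le_pow_left₀ (abs_nonneg _) (abs_real_inner_le_norm _ _) k
      _ = ‖X a‖ ^ k * ‖Y a‖ ^ k := mul_pow _ _ _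
  have hcd := condExp_prod_ae_eq_integral_condDistrib hXm hYm.aemeasurable hf_sm hint
  have hprodmap : μ.map (fun ω => (X ω, Y ω)) = (μ.map X).prod (μ.map Y) :=
    (indepFun_iff_map_prod_eq_prod_map_map hXm.aemeasurable hYm.aemeasurable).mp hXY
  have hYprob : IsProbabilityMeasure (μ.map Y) := Measure.isProbabilityMeasure_map hYm.aemeasurable
  have hcomp : μ.map (fun ω => (X ω, Y ω))
      = (μ.map X) ⊗ₘ (Kernel.const _ (μ.map Y)) := by
    rw [Measure.compProd_const]; exact hprodmap
  have hCD := condDistrib_ae_eq_of_measure_eq_compProd_of_measurable hXm hYm hcomp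
  have hCD0 : ∀ᵐ x ∂(μ.map X), condDistrib Y X μ x = μ.map Y :=
    hCD.mono fun x hx => by rw [hx, Kernel.const_apply]
  have hCD' : ∀ᵐ a ∂μ, (condDistrib Y X μ) (X a) = μ.map Y :=
    ae_of_ae_map hXm.aemeasurable hCD0
  have hfun : (fun ω' => (⟪ξ i ω', (∑ u, ξ u ω') - ξ i ω'⟫:ℝ) ^ k)
      = fun a => (fun p : EuclideanSpace ℝ (Fin d) × EuclideanSpace ℝ (Fin d) =>
          ⟪p.1, p.2⟫ ^ k) (X a, Y a) := by
    funext ω'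
    have : (∑ u, ξ u ω') - ξ i ω' = Y ω' := by
      have h := Finset.sum_erase_eq_sub (f := fun u => ξ u ω') (Finset.mem_univ i)
      rw [hY]
      exact h.symm
    rw [this]
  rw [hfun]
  refine hcd.trans ?_
  filter_upwards [hCD'] with a ha
  rw [ha, integral_map hYm.aemeasurable]
  exact (continuous_const.inner continuous_id).pow k |>.aestronglyMeasurable

lemma pointwise_bounds
    (ξ : Fin n → Ω → EuclideanSpace ℝ (Fin d))
    (hmeas : ∀ i, Measurable (ξ i))
    (hindep : iIndepFun ξ μ)
    (hmean : ∀ i, ∫ ω, ξ i ω ∂μ = 0)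
    (hmom : ∀ i, Integrable (fun ω => ‖ξ i ω‖ ^ 4) μ)
    (i : Fin n) (x : EuclideanSpace ℝ (Fin d)) :
    (∫ ω', (⟪x, ∑ u ∈ Finset.univ.erase i, ξ u ω'⟫:ℝ) ^ 2 ∂μ
        ≤ ∫ ω', (⟪x, ∑ u, ξ u ω'⟫:ℝ) ^ 2 ∂μ) ∧
    (∫ ω', (⟪x, ∑ u ∈ Finset.univ.erase i, ξ u ω'⟫:ℝ) ^ 4 ∂μ
        ≤ ‖x‖ ^ 4 * (∑ u, ∫ ω', ‖ξ u ω'‖ ^ 4 ∂μ)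
          + 3 * (∫ ω', (⟪x, ∑ u, ξ u ω'⟫:ℝ) ^ 2 ∂μ) ^ 2) := by
  classical
  set η : Fin n → Ω → ℝ := fun u ω => ⟪x, ξ u ω⟫ with hη
  have hηm : ∀ u, Measurable (η u) := fun u => Measurable.inner measurable_const (hmeas u)
  have hηindep : iIndepFun η μ :=
    hindep.comp (fun _ v => (⟪x, v⟫:ℝ))
      (fun _ => (continuous_const.inner continuous_id).measurable)
  have hintξ : ∀ u, Integrable (ξ u) μ := by
    intro u
    refine ((integrable_const (1:ℝ)).add (hmom u)).mono' (hmeas u).aestronglyMeasurable ?_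
    filter_upwards with ω
    have := abs_pow_le_one_add (x := ‖ξ u ω‖) (k := 1) (by norm_num)
    simpa [abs_of_nonneg (norm_nonneg (ξ u ω))] using this
  have hηmean : ∀ u, ∫ ω, η u ω ∂μ = 0 := by
    intro u
    have h := (innerSL ℝ x).integral_comp_comm (hintξ u)
    simp only [hmean u, map_zero] at h
    simpa [hη] using h
  have hη4 : ∀ u, Integrable (fun ω => η u ω ^ 4) μ := by
    intro u
    refine ((hmom u).const_mul (‖x‖ ^ 4)).mono' ((hηm u).pow_const 4).aestronglyMeasurable ?_
    filter_upwards with ω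
    rw [Real.norm_eq_abs, abs_pow]
    calc |η u ω| ^ 4 ≤ (‖x‖ * ‖ξ u ω‖) ^ 4 :=
          pow_le_pow_left₀ (abs_nonneg _) (abs_real_inner_le_norm _ _) 4
      _ = ‖x‖ ^ 4 * ‖ξ u ω‖ ^ 4 := mul_pow _ _ _
  have hsum : ∀ (s : Finset (Fin n)) ω, (⟪x, ∑ u ∈ s, ξ u ω⟫:ℝ) = ∑ u ∈ s, η u ω := by
    intro s ω; rw [inner_sum]
  have hkey2 : ∀ s : Finset (Fin n),
      ∫ ω, (⟪x, ∑ u ∈ s, ξ u ω⟫:ℝ) ^ 2 ∂μ = ∑ u ∈ s, ∫ ω, η u ω ^ 2 ∂μ := by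
    intro s
    rw [integral_congr_ae (Filter.Eventually.of_forall fun ω => by rw [hsum s ω])]
    exact integral_sum_sq hηm hηindep hηmean hη4 s
  have hnn : ∀ u, (0:ℝ) ≤ ∫ ω, η u ω ^ 2 ∂μ :=
    fun u => integral_nonneg fun ω => by positivity
  have hsub : ∑ u ∈ Finset.univ.erase i, ∫ ω, η u ω ^ 2 ∂μ ≤ ∑ u, ∫ ω, η u ω ^ 2 ∂μ :=
    Finset.sum_le_sum_of_subset_of_nonneg (Finset.erase_subset i Finset.univ)
      fun u _ _ => hnn u
  constructor
  · rw [hkey2 (Finset.univ.erase i), hkey2 Finset.univ]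
    exact hsub
  · have h4le : ∫ ω, (⟪x, ∑ u ∈ Finset.univ.erase i, ξ u ω⟫:ℝ) ^ 4 ∂μ
        ≤ ∑ u ∈ Finset.univ.erase i, ∫ ω, η u ω ^ 4 ∂μ
          + 3 * (∑ u ∈ Finset.univ.erase i, ∫ ω, η u ω ^ 2 ∂μ) ^ 2 := by
      rw [integral_congr_ae (Filter.Eventually.of_forall fun ω => by
        rw [hsum (Finset.univ.erase i) ω])]
      exact integral_sum_four_le hηm hηindep hηmean hη4 _
    have h44 : ∀ u, ∫ ω, η u ω ^ 4 ∂μ ≤ ‖x‖ ^ 4 * ∫ ω, ‖ξ u ω‖ ^ 4 ∂μ := by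
      intro u
      rw [← integral_const_mul]
      refine integral_mono (hη4 u) ((hmom u).const_mul _) fun ω => ?_
      have h1 : η u ω ^ 4 = |η u ω| ^ 4 := by
        rw [← abs_pow, abs_of_nonneg (by positivity)]
      rw [h1]
      calc |η u ω| ^ 4 ≤ (‖x‖ * ‖ξ u ω‖) ^ 4 :=
            pow_le_pow_left₀ (abs_nonneg _) (abs_real_inner_le_norm _ _) 4
        _ = ‖x‖ ^ 4 * ‖ξ u ω‖ ^ 4 := mul_pow _ _ _
    have hsum4 : ∑ u ∈ Finset.univ.erase i, ∫ ω, η u ω ^ 4 ∂μ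
        ≤ ‖x‖ ^ 4 * (∑ u, ∫ ω', ‖ξ u ω'‖ ^ 4 ∂μ) := by
      calc ∑ u ∈ Finset.univ.erase i, ∫ ω, η u ω ^ 4 ∂μ
          ≤ ∑ u, ∫ ω, η u ω ^ 4 ∂μ :=
            Finset.sum_le_sum_of_subset_of_nonneg (Finset.erase_subset i Finset.univ)
              (fun u _ _ => integral_nonneg fun ω => by positivity)
        _ ≤ ∑ u, ‖x‖ ^ 4 * ∫ ω', ‖ξ u ω'‖ ^ 4 ∂μ := Finset.sum_le_sum fun u _ => h44 u
        _ = ‖x‖ ^ 4 * ∑ u, ∫ ω', ‖ξ u ω'‖ ^ 4 ∂μ := (Finset.mul_sum _ _ _).symm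
    have hsq : (∑ u ∈ Finset.univ.erase i, ∫ ω, η u ω ^ 2 ∂μ) ^ 2
        ≤ (∫ ω', (⟪x, ∑ u, ξ u ω'⟫:ℝ) ^ 2 ∂μ) ^ 2 := by
      rw [hkey2 Finset.univ]
      exact pow_le_pow_left₀ (Finset.sum_nonneg fun u _ => hnn u) hsub 2
    nlinarith [h4le, hsum4, hsq]

lemma quadForm_eq
    (ξ : Fin n → Ω → EuclideanSpace ℝ (Fin d))
    (hmeas : ∀ i, Measurable (ξ i))
    (hmean : ∀ i, ∫ ω, ξ i ω ∂μ = 0)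
    (hmom : ∀ i, Integrable (fun ω => ‖ξ i ω‖ ^ 4) μ)
    (x : EuclideanSpace ℝ (Fin d)) :
    (⟪x, mulVecE (covMatrix μ (fun ω' => ∑ u, ξ u ω')) x⟫:ℝ)
      = ∫ ω, (⟪x, ∑ u, ξ u ω⟫:ℝ) ^ 2 ∂μ := by
  classical
  set W : Ω → EuclideanSpace ℝ (Fin d) := fun ω => ∑ u, ξ u ω with hW
  have hWm : Measurable W := Finset.measurable_sum _ fun u _ => hmeas u
  have hW4 : Integrable (fun ω => ‖W ω‖ ^ 4) μ := by
    refine (integrable_pow_four_sum (f := fun u ω => ‖ξ u ω‖)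
      (fun u => (hmeas u).norm) (fun u => hmom u) (s := Finset.univ)).mono'
      (hWm.norm.pow_const 4).aestronglyMeasurable ?_
    filter_upwards with ω
    have h1 : ‖W ω‖ ≤ ∑ u, ‖ξ u ω‖ := norm_sum_le _ _
    rw [Real.norm_eq_abs, abs_of_nonneg (by positivity)]
    exact pow_le_pow_left₀ (norm_nonneg _) h1 4
  have hintξ : ∀ u, Integrable (ξ u) μ := by
    intro u
    refine ((integrable_const (1:ℝ)).add (hmom u)).mono' (hmeas u).aestronglyMeasurable ?_
    filter_upwards with ω
    have := abs_pow_le_one_add (x := ‖ξ u ω‖) (k := 1) (by norm_num)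
    simpa [abs_of_nonneg (norm_nonneg (ξ u ω))] using this
  have hintW : Integrable W μ := by
    have : Integrable (fun ω => ∑ u, ξ u ω) μ :=
      integrable_finset_sum _ fun u _ => hintξ u
    exact this
  have hmeanW : ∫ ω, W ω ∂μ = 0 := by
    rw [hW, integral_finset_sum _ fun u _ => hintξ u]
    simp [hmean]
  have hWj : ∀ j, ∫ ω, W ω j ∂μ = 0 := by
    intro j
    have h := (EuclideanSpace.proj j (𝕜 := ℝ)).integral_comp_comm hintW
    rw [hmeanW] at h
    simpa using h
  have hWjm : ∀ j, Measurable fun ω => W ω j :=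
    fun j => ((EuclideanSpace.proj j (𝕜 := ℝ)).continuous.measurable).comp hWm
  have hWjk : ∀ j k, Integrable (fun ω => W ω j * W ω k) μ := by
    intro j k
    refine ((integrable_const (1:ℝ)).add hW4).mono'
      ((hWjm j).mul (hWjm k)).aestronglyMeasurable ?_
    filter_upwards with ω
    rw [Real.norm_eq_abs, abs_mul]
    calc |W ω j| * |W ω k| ≤ ‖W ω‖ * ‖W ω‖ :=
          mul_le_mul (euclid_apply_le_norm _ _) (euclid_apply_le_norm _ _)
            (abs_nonneg _) (norm_nonneg _)
      _ = |‖W ω‖| ^ 2 := by rw [abs_of_nonneg (norm_nonneg _)]; ring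
      _ ≤ 1 + ‖W ω‖ ^ 4 := abs_pow_le_one_add (by norm_num)
  have hinner : ∀ (y v : EuclideanSpace ℝ (Fin d)), (⟪y, v⟫:ℝ) = ∑ j, y j * v j := by
    intro y v
    simp [PiLp.inner_apply, RCLike.inner_apply, conj_trivial]
    exact Finset.sum_congr rfl fun _ _ => mul_comm _ _
  have hM : ∀ j, (mulVecE (covMatrix μ W) x) j
      = ∑ k, (∫ ω, W ω j * W ω k ∂μ) * x k := by
    intro j
    simp [mulVecE, covMatrix, Matrix.mulVec, dotProduct, hWj]
  have hRHS : ∫ ω, (⟪x, W ω⟫:ℝ) ^ 2 ∂μ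
      = ∑ j, ∑ k, x j * x k * ∫ ω, W ω j * W ω k ∂μ := by
    have hexp : ∀ ω, (⟪x, W ω⟫:ℝ) ^ 2 = ∑ j, ∑ k, x j * x k * (W ω j * W ω k) := by
      intro ω
      rw [hinner, sq, Finset.sum_mul_sum]
      exact Finset.sum_congr rfl fun j _ => Finset.sum_congr rfl fun k _ => by ring
    rw [integral_congr_ae (Filter.Eventually.of_forall hexp),
      integral_finset_sum _ fun j _ => integrable_finset_sum _ fun k _ =>
        ((hWjk j k).const_mul _)]
    refine Finset.sum_congr rfl fun j _ => ?_
    rw [integral_finset_sum _ fun k _ => ((hWjk j k).const_mul _)]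
    exact Finset.sum_congr rfl fun k _ => integral_const_mul _ _
  rw [hinner, hRHS]
  refine Finset.sum_congr rfl fun j _ => ?_
  rw [hM j, Finset.mul_sum]
  exact Finset.sum_congr rfl fun k _ => by ring

end Main

end AuxPortnoy

/-- Lemma `portnoy`: conditional second- and fourth-moment bounds for
`ξᵢ · W^{(i)}` given `ξᵢ`, where `W^{(i)} = W - ξᵢ`. -/
theorem portnoy_lemma
    {d n : ℕ} {Ω : Type} [MeasurableSpace Ω] (μ : Measure Ω) [IsProbabilityMeasure μ]
    (ξ : Fin n → Ω → EuclideanSpace ℝ (Fin d))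
    (hmeas : ∀ i, Measurable (ξ i))
    (hindep : iIndepFun ξ μ)
    (hmean : ∀ i, ∫ ω, ξ i ω ∂μ = 0)
    (hmom : ∀ i, Integrable (fun ω => ‖ξ i ω‖ ^ 4) μ)
    (i : Fin n) :
    (∀ᵐ ω ∂μ,
      (μ[fun ω' => ⟪ξ i ω', (∑ u, ξ u ω') - ξ i ω'⟫ ^ 2 |
          MeasurableSpace.comap (ξ i) inferInstance]) ω ≤
        ⟪ξ i ω, mulVecE (covMatrix μ (fun ω' => ∑ u, ξ u ω')) (ξ i ω)⟫) ∧
    (∀ᵐ ω ∂μ,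
      (μ[fun ω' => ⟪ξ i ω', (∑ u, ξ u ω') - ξ i ω'⟫ ^ 4 |
          MeasurableSpace.comap (ξ i) inferInstance]) ω ≤
        ‖ξ i ω‖ ^ 4 * (∑ u, ∫ ω', ‖ξ u ω'‖ ^ 4 ∂μ) +
          3 * ⟪ξ i ω, mulVecE (covMatrix μ (fun ω' => ∑ u, ξ u ω')) (ξ i ω)⟫ ^ 2) := by
  constructor
  · filter_upwards [condexp_inner_pow_eq ξ hmeas hindep hmom i (k := 2) (by norm_num)]
      with ω hω
    rw [hω, quadForm_eq ξ hmeas hmean hmom (ξ i ω)]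
    exact (pointwise_bounds ξ hmeas hindep hmean hmom i (ξ i ω)).1
  · filter_upwards [condexp_inner_pow_eq ξ hmeas hindep hmom i (k := 4) (by norm_num)]
      with ω hω
    rw [hω, quadForm_eq ξ hmeas hmean hmom (ξ i ω)]
    exact (pointwise_bounds ξ hmeas hindep hmean hmom i (ξ i ω)).2

end Paper
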